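/- Let θ ∈ (0, π/2), λ ≥ 1. Define the Markov transition kernel on ℝ₊ by P(δ, A) = ∫∫_{ℝ²} 1_A(δ − x cos θ − y sin θ)·p*_δ(x,y) dx dy, where p*_δ is the selected-step density. Then for every δ ∈ ℝ₊ and every Borel set A ⊆ ℝ₊ with positive Lebesgue measure, P(δ, A) > 0. -/
import Mathlib


open MeasureTheory ProbabilityTheory Real Set Filter

noncomputable def phi (x : ℝ) : ℝ := Real.exp (-x^2/2) / Real.sqrt (2*Real.pi)
noncomputable def Phi (x : ℝ) : ℝ := ∫ u in Set.Iic x, phi u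
noncomputable def pdelta (θ δ : ℝ) (z : ℝ × ℝ) : ℝ :=
  phi z.1 * phi z.2 * Set.indicator (Set.Ici (0:ℝ)) (fun _ => 1)
    (δ - z.1 * Real.cos θ - z.2 * Real.sin θ) / Phi δ
noncomputable def p1 (θ δ x : ℝ) : ℝ :=
  phi x * Phi ((δ - x * Real.cos θ) / Real.sin θ) / Phi δ
noncomputable def F1 (θ δ x : ℝ) : ℝ := ∫ u in Set.Iic x, p1 θ δ u
noncomputable def pstar (lam : ℕ) (θ δ : ℝ) (z : ℝ × ℝ) : ℝ :=
  (lam : ℝ) * pdelta θ δ z * F1 θ δ z.1 ^ (lam - 1)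
noncomputable def p1star (lam : ℕ) (θ δ x : ℝ) : ℝ :=
  (lam : ℝ) * p1 θ δ x * F1 θ δ x ^ (lam - 1)
noncomputable def p2star (lam : ℕ) (θ δ y : ℝ) : ℝ :=
  (lam : ℝ) * (phi y / Phi δ) *
    ∫ u in Set.Iic ((δ - y * Real.sin θ) / Real.cos θ), phi u * F1 θ δ u ^ (lam - 1)

lemma phi_pos (x : ℝ) : 0 < phi x :=
  div_pos (Real.exp_pos _) (Real.sqrt_pos.2 (by positivity))

lemma phi_cont : Continuous phi := by unfold phi; fun_prop

lemma phi_integrable : Integrable phi := by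
  have h : Integrable (fun x : ℝ => Real.exp (-(1/2 : ℝ) * x ^ 2)) :=
    integrable_exp_neg_mul_sq (by norm_num)
  have := h.div_const (Real.sqrt (2 * Real.pi))
  refine this.congr (Filter.Eventually.of_forall fun x => ?_)
  unfold phi; ring_nf

lemma Phi_nonneg (x : ℝ) : 0 ≤ Phi x :=
  setIntegral_nonneg measurableSet_Iic fun u _ => (phi_pos u).le

lemma Phi_mono : Monotone Phi := fun x y h =>
  setIntegral_mono_set phi_integrable.integrableOn
    (Filter.Eventually.of_forall fun u => (phi_pos u).le)
    (HasSubset.Subset.eventuallyLE (Set.Iic_subset_Iic.2 h))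

lemma Phi_pos (x : ℝ) : 0 < Phi x := by
  have h1 : (0:ℝ) < ∫ u in (x-1)..x, phi u := by
    apply intervalIntegral.intervalIntegral_pos_of_pos_on
      phi_integrable.intervalIntegrable (fun u _ => phi_pos u) (by linarith)
  have h2 : (∫ u in (x-1)..x, phi u) = ∫ u in Set.Ioc (x-1) x, phi u :=
    intervalIntegral.integral_of_le (by linarith)
  have h3 : (∫ u in Set.Ioc (x-1) x, phi u) ≤ Phi x :=
    setIntegral_mono_set phi_integrable.integrableOn
      (Filter.Eventually.of_forall fun u => (phi_pos u).le)
      (HasSubset.Subset.eventuallyLE (fun u hu => hu.2))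
  linarith [h2 ▸ h1]

lemma Phi_le (x : ℝ) : Phi x ≤ ∫ u, phi u :=
  setIntegral_le_integral phi_integrable
    (Filter.Eventually.of_forall fun u => (phi_pos u).le)

lemma Phi_meas : Measurable Phi := Phi_mono.measurable

lemma p1_pos (θ δ x : ℝ) : 0 < p1 θ δ x :=
  div_pos (mul_pos (phi_pos x) (Phi_pos _)) (Phi_pos δ)

lemma p1_meas (θ δ : ℝ) : Measurable (p1 θ δ) := by
  apply Measurable.div_const
  exact phi_cont.measurable.mul (Phi_meas.comp (by fun_prop))

lemma p1_le (θ δ x : ℝ) : p1 θ δ x ≤ (∫ u, phi u) / Phi δ * phi x := by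
  calc p1 θ δ x ≤ phi x * (∫ u, phi u) / Phi δ := by
        unfold p1
        gcongr
        · exact Phi_nonneg δ
        · exact (phi_pos x).le
        · exact Phi_le _
    _ = (∫ u, phi u) / Phi δ * phi x := by ring

lemma p1_integrable (θ δ : ℝ) : Integrable (p1 θ δ) := by
  refine Integrable.mono' ((phi_integrable.const_mul ((∫ u, phi u) / Phi δ)))
    (p1_meas θ δ).aestronglyMeasurable (Filter.Eventually.of_forall fun x => ?_)
  rw [Real.norm_of_nonneg (p1_pos θ δ x).le]
  exact p1_le θ δ x

lemma F1_pos (θ δ x : ℝ) : 0 < F1 θ δ x := by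
  have h1 : (0:ℝ) < ∫ u in (x-1)..x, p1 θ δ u :=
    intervalIntegral.intervalIntegral_pos_of_pos_on
      (p1_integrable θ δ).intervalIntegrable (fun u _ => p1_pos θ δ u) (by linarith)
  have h2 : (∫ u in (x-1)..x, p1 θ δ u) = ∫ u in Set.Ioc (x-1) x, p1 θ δ u :=
    intervalIntegral.integral_of_le (by linarith)
  have h3 : (∫ u in Set.Ioc (x-1) x, p1 θ δ u) ≤ F1 θ δ x :=
    setIntegral_mono_set (p1_integrable θ δ).integrableOn
      (Filter.Eventually.of_forall fun u => (p1_pos θ δ u).le)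
      (HasSubset.Subset.eventuallyLE (fun u hu => hu.2))
  linarith [h2 ▸ h1]

lemma F1_nonneg (θ δ x : ℝ) : 0 ≤ F1 θ δ x := (F1_pos θ δ x).le

lemma F1_mono (θ δ : ℝ) : Monotone (F1 θ δ) := fun x y h =>
  setIntegral_mono_set (p1_integrable θ δ).integrableOn
    (Filter.Eventually.of_forall fun u => (p1_pos θ δ u).le)
    (HasSubset.Subset.eventuallyLE (Set.Iic_subset_Iic.2 h))

lemma F1_meas (θ δ : ℝ) : Measurable (F1 θ δ) := (F1_mono θ δ).measurable

lemma F1_le (θ δ x : ℝ) : F1 θ δ x ≤ (∫ u, phi u) / Phi δ * ∫ u, phi u := by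
  calc F1 θ δ x ≤ ∫ u in Set.Iic x, (∫ u, phi u) / Phi δ * phi u :=
        setIntegral_mono_on (p1_integrable θ δ).integrableOn
          ((phi_integrable.const_mul _).integrableOn) measurableSet_Iic
          (fun u _ => p1_le θ δ u)
    _ ≤ ∫ u, (∫ u, phi u) / Phi δ * phi u :=
        setIntegral_le_integral (phi_integrable.const_mul _)
          (Filter.Eventually.of_forall fun u =>
            mul_nonneg (div_nonneg (integral_nonneg fun v => (phi_pos v).le)
              (Phi_nonneg δ)) (phi_pos u).le)
    _ = (∫ u, phi u) / Phi δ * ∫ u, phi u := integral_const_mul _ _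

/-- the transition kernel P(δ,A) of the chain δ_{t+1} = δ_t − N*·n
gives positive mass to every Borel A ⊆ ℝ₊ of positive Lebesgue measure. -/
theorem stmt13 (lam : ℕ) (hlam : 1 ≤ lam) (θ : ℝ)
    (hθ : θ ∈ Set.Ioo 0 (Real.pi/2))
    (δ : ℝ) (hδ : 0 ≤ δ)
    (A : Set ℝ) (hA : MeasurableSet A) (hAsub : A ⊆ Set.Ici 0)
    (hApos : 0 < volume A) :
    0 < ∫ z : ℝ × ℝ,
        Set.indicator A (fun _ => (1:ℝ)) (δ - z.1 * Real.cos θ - z.2 * Real.sin θ)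
          * pstar lam θ δ z := by
  obtain ⟨hθ0, hθ1⟩ := hθ
  have hpi := Real.pi_pos
  have hc : 0 < Real.cos θ := Real.cos_pos_of_mem_Ioo ⟨by linarith, hθ1⟩
  have hs : 0 < Real.sin θ := Real.sin_pos_of_pos_of_lt_pi hθ0 (by linarith)
  have hlamp : (0:ℝ) < (lam : ℝ) := by exact_mod_cast hlam
  set M : ℝ := ∫ u, phi u with hMdef
  have hM0 : 0 ≤ M := integral_nonneg fun v => (phi_pos v).le
  set T : ℝ × ℝ → ℝ := fun z => δ - z.1 * Real.cos θ - z.2 * Real.sin θ with hTdef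
  set f : ℝ × ℝ → ℝ := fun z =>
    Set.indicator A (fun _ => (1:ℝ)) (T z) * pstar lam θ δ z with hfdef
  have hT : Measurable T := by fun_prop
  have hfnn : ∀ z, 0 ≤ f z := by
    intro z
    apply mul_nonneg (Set.indicator_nonneg (fun _ _ => zero_le_one) _)
    apply mul_nonneg (mul_nonneg hlamp.le ?_) (pow_nonneg (F1_nonneg θ δ _) _)
    unfold pdelta
    apply div_nonneg _ (Phi_nonneg δ)
    exact mul_nonneg (mul_nonneg (phi_pos _).le (phi_pos _).le)
      (Set.indicator_nonneg (fun _ _ => zero_le_one) _)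
  have hfmeas : Measurable f := by
    apply Measurable.mul
    · exact (measurable_const.indicator hA).comp hT
    · unfold pstar pdelta
      apply Measurable.mul
      · apply Measurable.mul measurable_const
        apply Measurable.div_const
        exact ((phi_cont.measurable.comp measurable_fst).mul
          (phi_cont.measurable.comp measurable_snd)).mul
          ((measurable_const.indicator measurableSet_Ici).comp hT)
      · exact ((F1_meas θ δ).comp measurable_fst).pow_const _
  set C : ℝ := (lam : ℝ) * (M / Phi δ * M) ^ (lam - 1) / Phi δ with hCdef
  have hbound : ∀ z : ℝ × ℝ, ‖f z‖ ≤ C * (phi z.1 * phi z.2) := by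
    intro z
    rw [Real.norm_of_nonneg (hfnn z)]
    have hfz : f z = (lam : ℝ) *
        (Set.indicator A (fun _ => (1:ℝ)) (T z) *
          Set.indicator (Set.Ici (0:ℝ)) (fun _ => 1) (T z) * F1 θ δ z.1 ^ (lam - 1)) / Phi δ
        * (phi z.1 * phi z.2) := by
      simp only [hfdef]; unfold pstar pdelta; ring
    rw [hfz, hCdef]
    have hprod : Set.indicator A (fun _ => (1:ℝ)) (T z) *
        Set.indicator (Set.Ici (0:ℝ)) (fun _ => 1) (T z) * F1 θ δ z.1 ^ (lam - 1)
        ≤ (M / Phi δ * M) ^ (lam - 1) := by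
      calc _ ≤ 1 * 1 * (M / Phi δ * M) ^ (lam - 1) := by
              apply mul_le_mul (mul_le_mul ?_ ?_ ?_ zero_le_one)
                (pow_le_pow_left₀ (F1_nonneg θ δ _) (F1_le θ δ _) _)
                (pow_nonneg (F1_nonneg θ δ _) _) (by norm_num)
              · exact Set.indicator_apply_le' (fun _ => le_rfl) (fun _ => zero_le_one)
              · exact Set.indicator_apply_le' (fun _ => le_rfl) (fun _ => zero_le_one)
              · exact Set.indicator_nonneg (fun _ _ => zero_le_one) _
        _ = (M / Phi δ * M) ^ (lam - 1) := by ring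
    apply mul_le_mul_of_nonneg_right _ (mul_nonneg (phi_pos _).le (phi_pos _).le)
    apply div_le_div_of_nonneg_right ?_ ?_
    · exact mul_le_mul_of_nonneg_left hprod hlamp.le
    · exact Phi_nonneg δ
  have hint : Integrable f := by
    refine Integrable.mono' ?_ hfmeas.aestronglyMeasurable (Filter.Eventually.of_forall hbound)
    have h := (phi_integrable.mul_prod phi_integrable).const_mul C
    rwa [← Measure.volume_eq_prod] at h
  have hfnn' : (0 : ℝ × ℝ → ℝ) ≤ f := hfnn
  rw [integral_pos_iff_support_of_nonneg hfnn' hint]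
  have hSm : MeasurableSet (T ⁻¹' A) := hT hA
  have hsub : T ⁻¹' A ⊆ Function.support f := by
    intro z hz
    have hz' : T z ∈ A := hz
    have hz0 : T z ∈ Set.Ici (0:ℝ) := hAsub hz'
    simp only [Function.mem_support, hfdef]
    unfold pstar pdelta
    rw [Set.indicator_of_mem hz', Set.indicator_of_mem hz0]
    have h1 : 0 < phi z.1 * phi z.2 * 1 / Phi δ :=
      div_pos (by simpa using mul_pos (phi_pos z.1) (phi_pos z.2)) (Phi_pos δ)
    exact ne_of_gt (mul_pos one_pos (mul_pos (mul_pos hlamp h1) (pow_pos (F1_pos θ δ _) _)))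
  refine lt_of_lt_of_le ?_ (measure_mono hsub)
  rw [Measure.volume_eq_prod ℝ ℝ, Measure.prod_apply hSm]
  set κ : ENNReal := ENNReal.ofReal |(Real.sin θ)⁻¹| * volume A with hκdef
  have hslice : ∀ x : ℝ, (volume : Measure ℝ) (Prod.mk x ⁻¹' (T ⁻¹' A)) = κ := by
    intro x
    have heq : Prod.mk x ⁻¹' (T ⁻¹' A)
        = (fun y : ℝ => y * Real.sin θ) ⁻¹' (Neg.neg ⁻¹'
            ((fun t : ℝ => (δ - x * Real.cos θ) + t) ⁻¹' A)) := by
      ext y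
      simp only [Set.mem_preimage, hTdef]
      rw [show δ - x * Real.cos θ - y * Real.sin θ
        = δ - x * Real.cos θ + -(y * Real.sin θ) from by ring]
    rw [heq, Real.volume_preimage_mul_right hs.ne', Measure.measure_preimage_neg,
      measure_preimage_add]
  calc (0:ENNReal) < κ * volume (Set.univ : Set ℝ) := by
        rw [Real.volume_univ]
        refine ENNReal.mul_pos ?_ (by simp)
        exact mul_ne_zero (by simp [hs.ne']) hApos.ne'
    _ = ∫⁻ x : ℝ, κ := (lintegral_const κ).symm
    _ = ∫⁻ x : ℝ, volume (Prod.mk x ⁻¹' (T ⁻¹' A)) := by simp_rw [hslice]
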